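/- Let α ≥ 1 and β ≥ 1 be integers, let G = (G₁,G₂) ∈ ℂ[X,Y]² satisfy det J_G(X,Y) = c·X^{β−α−1} identically for some nonzero constant c ∈ ℂ (in particular β ≥ α+1), let H ∈ ℂ[U,V] be irreducible with zero set {(u,v) : H(u,v) = 0} = {G(0,y) : y ∈ ℂ}, let γ ≥ 1 be an integer and S ∈ ℂ[X,Y] with S(0,Y) ≢ 0 and H(G(X,Y)) = X^{γ}·S(X,Y), and assume that G₁(0,Y) is a nonconstant polynomial in Y. Then γ = β − α. -/

import Mathlib

open MvPolynomial Filter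

abbrev PolyPair := MvPolynomial (Fin 2) ℂ × MvPolynomial (Fin 2) ℂ

noncomputable def eval2 (p : MvPolynomial (Fin 2) ℂ) (x y : ℂ) : ℂ :=
  MvPolynomial.eval ![x, y] p

noncomputable def jacDet (P Q : MvPolynomial (Fin 2) ℂ) : MvPolynomial (Fin 2) ℂ :=
  pderiv 0 P * pderiv 1 Q - pderiv 1 P * pderiv 0 Q

noncomputable def polyMap (F : PolyPair) (p : ℂ × ℂ) : ℂ × ℂ :=
  (eval2 F.1 p.1 p.2, eval2 F.2 p.1 p.2)

/-- `F` is a Keller mapping: its Jacobian determinant is a nonzero constant. -/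
def IsKeller (F : PolyPair) : Prop :=
  ∃ c : ℂ, c ≠ 0 ∧ jacDet F.1 F.2 = MvPolynomial.C c

/-- `(u₀,v₀)` is a singular point of the plane curve `{H = 0}`. -/
def IsSingularPoint (H : MvPolynomial (Fin 2) ℂ) (p : ℂ × ℂ) : Prop :=
  eval2 H p.1 p.2 = 0 ∧ eval2 (pderiv 0 H) p.1 p.2 = 0 ∧ eval2 (pderiv 1 H) p.1 p.2 = 0

/-- `G` is the `R`-dual of `F`, where `R(x,y) = (x^{-α}, x^β y + x^{-α} φ(x))`. -/
def IsRDual (F G : PolyPair) (α β : ℕ) (φ : Polynomial ℂ) : Prop :=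
  ∀ x : ℂ, x ≠ 0 → ∀ y : ℂ,
    polyMap G (x, y) = polyMap F ((x ^ α)⁻¹, x ^ β * y + (x ^ α)⁻¹ * Polynomial.eval x φ)

/-- `p` is an asymptotic value of `F` : a limit of `F` along a curve tending to infinity. -/
def IsAsympValue (F : PolyPair) (p : ℂ × ℂ) : Prop :=
  ∃ γ : ℝ → ℂ × ℂ, Continuous γ ∧ Tendsto (fun t => ‖γ t‖) atTop atTop ∧
    Tendsto (fun t => polyMap F (γ t)) atTop (nhds p)

/-- `F` is a polynomial automorphism of `ℂ²`. -/
def IsPolyAuto (F : PolyPair) : Prop :=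
  ∃ Finv : PolyPair, (∀ p, polyMap F (polyMap Finv p) = p) ∧
    (∀ p, polyMap Finv (polyMap F p) = p)

private lemma eval_aeval_fin2 (g : Fin 2 → MvPolynomial (Fin 2) ℂ) (P : MvPolynomial (Fin 2) ℂ)
    (r : Fin 2 → ℂ) :
    eval r (aeval g P) = eval (fun i => eval r (g i)) P := by
  induction P using MvPolynomial.induction_on with
  | C a => simp
  | add p q hp hq => rw [map_add, map_add, eval_add, hp, hq]
  | mul_X p j hp => rw [map_mul, aeval_X, eval_mul, eval_mul, hp, eval_X]

private lemma pd_aeval (i : Fin 2) (g : Fin 2 → MvPolynomial (Fin 2) ℂ)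
    (P : MvPolynomial (Fin 2) ℂ) :
    pderiv i (aeval g P) =
      aeval g (pderiv 0 P) * pderiv i (g 0) + aeval g (pderiv 1 P) * pderiv i (g 1) := by
  induction P using MvPolynomial.induction_on with
  | C a => simp
  | add p q hp hq => simp only [map_add, hp, hq]; ring
  | mul_X p j hp =>
    rw [map_mul, aeval_X, pderiv_mul, hp]
    fin_cases j <;> simp [pderiv_mul, pderiv_X] <;> ring

private lemma finSucc_pderiv (Q : MvPolynomial (Fin 2) ℂ) :
    finSuccEquiv ℂ 1 (pderiv 0 Q) = Polynomial.derivative (finSuccEquiv ℂ 1 Q) := by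
  induction Q using MvPolynomial.induction_on with
  | C a => simp [finSuccEquiv_apply]
  | add p q hp hq => simp [hp, hq]
  | mul_X p j hp =>
    rw [pderiv_mul, map_add, map_mul, map_mul, hp, map_mul, Polynomial.derivative_mul]
    rcases Fin.eq_zero_or_eq_succ j with rfl | ⟨j', rfl⟩
    · simp [finSuccEquiv_X_zero]
    · simp [finSuccEquiv_X_succ, pderiv_X_of_ne (Fin.succ_ne_zero j')]

private lemma pderiv0_eq_zero_of_dvd (H : MvPolynomial (Fin 2) ℂ)
    (h : H ∣ pderiv 0 H) : pderiv 0 H = 0 := by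
  by_contra hne
  have hdvd : (finSuccEquiv ℂ 1) H ∣ (finSuccEquiv ℂ 1) (pderiv 0 H) := by
    rcases h with ⟨t, ht⟩
    exact ⟨finSuccEquiv ℂ 1 t, by rw [ht, map_mul]⟩
  have hne' : (finSuccEquiv ℂ 1) (pderiv 0 H) ≠ 0 := fun h0 =>
    hne ((AlgEquiv.injective _) (by rw [h0, map_zero]))
  have hd := Polynomial.degree_le_of_dvd hdvd hne'
  rw [finSucc_pderiv] at hd hne'
  have hH0 : (finSuccEquiv ℂ 1) H ≠ 0 := fun h0 => hne' (by rw [h0]; simp)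
  exact absurd (lt_of_le_of_lt hd (Polynomial.degree_derivative_lt hH0)) (lt_irrefl _)

private lemma support_zero_of_pderiv (H : MvPolynomial (Fin 2) ℂ) (i : Fin 2)
    (h : pderiv i H = 0) : ∀ m ∈ H.support, m i = 0 := by
  intro m hm
  by_contra hmi
  have hle : Finsupp.single i 1 ≤ m := by
    rw [Finsupp.single_le_iff]; omega
  have hco : coeff (m - Finsupp.single i 1) (pderiv i H) = coeff m H * (m i : ℂ) := by
    conv_lhs => rw [H.as_sum, map_sum]
    rw [coeff_sum]
    rw [Finset.sum_congr rfl (fun d _ => by rw [pderiv_monomial, coeff_monomial])]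
    rw [Finset.sum_eq_single m]
    · rw [if_pos rfl]
    · intro d hd hdm
      split_ifs with hd'
      · rcases Nat.eq_zero_or_pos (d i) with h0 | h1
        · simp [h0]
        · exfalso
          apply hdm
          have hle' : Finsupp.single i 1 ≤ d := by rw [Finsupp.single_le_iff]; omega
          calc d = d - Finsupp.single i 1 + Finsupp.single i 1 := (tsub_add_cancel_of_le hle').symm
          _ = m - Finsupp.single i 1 + Finsupp.single i 1 := by rw [hd']
          _ = m := tsub_add_cancel_of_le hle
      · rfl
    · intro hm'; exact absurd hm hm'
  rw [h] at hco
  simp only [coeff_zero] at hco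
  have := mem_support_iff.1 hm
  rcases mul_eq_zero.1 hco.symm with h1 | h2
  · exact this h1
  · exact hmi (Nat.cast_eq_zero.1 h2)

private lemma eq_C_of_pderiv_zero' (H : MvPolynomial (Fin 2) ℂ)
    (hz : ∀ i m, m ∈ H.support → m i = 0) : H = C (coeff 0 H) := by
  ext m
  rcases eq_or_ne m 0 with rfl | hm
  · simp
  · rw [coeff_C, if_neg (Ne.symm hm)]
    by_contra hc
    have hms : m ∈ H.support := mem_support_iff.2 hc
    apply hm
    ext i
    exact hz i m hms

private lemma prime_X0 : Prime (X 0 : MvPolynomial (Fin 2) ℂ) := by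
  refine (MulEquiv.prime_iff ((finSuccEquiv ℂ 1).toRingEquiv.toMulEquiv)).mp ?_
  have : ((finSuccEquiv ℂ 1).toRingEquiv.toMulEquiv) (X 0) = Polynomial.X :=
    finSuccEquiv_X_zero
  rw [this]
  exact Polynomial.prime_X

private lemma eval0_of_X0_dvd (P : MvPolynomial (Fin 2) ℂ)
    (h : (X 0 : MvPolynomial (Fin 2) ℂ) ∣ P) (y : ℂ) : eval ![0, y] P = 0 := by
  rcases h with ⟨t, rfl⟩
  rw [eval_mul, eval_X]
  simp

private lemma psi_derivative (Q : MvPolynomial (Fin 2) ℂ) :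
    Polynomial.derivative (aeval ![0, Polynomial.X] Q : Polynomial ℂ) =
      aeval ![0, Polynomial.X] (pderiv 1 Q) := by
  induction Q using MvPolynomial.induction_on with
  | C a => simp
  | add p q hp hq => simp [hp, hq]
  | mul_X p j hp =>
    simp only [map_mul, Polynomial.derivative_mul, hp, pderiv_mul, map_add]
    fin_cases j <;> simp [pderiv_X]

private lemma eval2_psi (Q : MvPolynomial (Fin 2) ℂ) (y : ℂ) :
    eval ![0, y] Q = Polynomial.eval y (aeval ![0, Polynomial.X] Q : Polynomial ℂ) := by
  induction Q using MvPolynomial.induction_on with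
  | C a => simp
  | add p q hp hq => simp [hp, hq]
  | mul_X p j hp =>
    simp only [map_mul, hp, Polynomial.eval_mul]
    fin_cases j <;> simp

/-- under the standing hypotheses, `γ = β - α`. -/
theorem gamma_eq_beta_sub_alpha (α β : ℕ) (hα : 1 ≤ α) (hβ1 : 1 ≤ β)
    (G : PolyPair) (c : ℂ) (hc : c ≠ 0)
    (hdet : jacDet G.1 G.2 = MvPolynomial.C c * (X 0 : MvPolynomial (Fin 2) ℂ) ^ (β - α - 1))
    (hβ : α + 1 ≤ β)
    (H : MvPolynomial (Fin 2) ℂ) (hH : Irreducible H)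
    (hzero : {p : ℂ × ℂ | eval2 H p.1 p.2 = 0} = {p : ℂ × ℂ | ∃ y : ℂ, p = polyMap G (0, y)})
    (γ : ℕ) (hγ : 1 ≤ γ) (S : MvPolynomial (Fin 2) ℂ)
    (hS0 : ∃ y : ℂ, eval2 S 0 y ≠ 0)
    (hfac : aeval ![G.1, G.2] H = (X 0 : MvPolynomial (Fin 2) ℂ) ^ γ * S)
    (hG1 : ∃ y₁ y₂ : ℂ, eval2 G.1 0 y₁ ≠ eval2 G.1 0 y₂) :
    γ = β - α := by
  set A := aeval ![G.1, G.2] (pderiv 0 H) with hA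
  set B := aeval ![G.1, G.2] (pderiv 1 H) with hB
  have E : ∀ i : Fin 2, A * pderiv i G.1 + B * pderiv i G.2 =
      pderiv i ((X 0 : MvPolynomial (Fin 2) ℂ) ^ γ * S) := by
    intro i
    have h := pd_aeval i ![G.1, G.2] H
    rw [hfac] at h
    simpa [hA, hB] using h.symm
  have hpd0 : pderiv 0 ((X 0 : MvPolynomial (Fin 2) ℂ) ^ γ * S) =
      (γ : MvPolynomial (Fin 2) ℂ) * X 0 ^ (γ - 1) * S + X 0 ^ γ * pderiv 0 S := by
    rw [pderiv_mul, pderiv_pow, pderiv_X_self]; ring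
  have hpd1 : pderiv 1 ((X 0 : MvPolynomial (Fin 2) ℂ) ^ γ * S) = X 0 ^ γ * pderiv 1 S := by
    rw [pderiv_mul, pderiv_pow, pderiv_X_of_ne (by decide)]; ring
  have starA : A * (MvPolynomial.C c * X 0 ^ (β - α - 1)) =
      ((γ : MvPolynomial (Fin 2) ℂ) * X 0 ^ (γ - 1) * S + X 0 ^ γ * pderiv 0 S) * pderiv 1 G.2
        - (X 0 ^ γ * pderiv 1 S) * pderiv 0 G.2 := by
    have h2 : A * jacDet G.1 G.2 =
        (A * pderiv 0 G.1 + B * pderiv 0 G.2) * pderiv 1 G.2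
          - (A * pderiv 1 G.1 + B * pderiv 1 G.2) * pderiv 0 G.2 := by
      unfold jacDet; ring
    rw [E 0, E 1, hpd0, hpd1] at h2
    rw [← hdet]
    exact h2
  have starB : B * (MvPolynomial.C c * X 0 ^ (β - α - 1)) =
      (X 0 ^ γ * pderiv 1 S) * pderiv 0 G.1
        - ((γ : MvPolynomial (Fin 2) ℂ) * X 0 ^ (γ - 1) * S + X 0 ^ γ * pderiv 0 S)
          * pderiv 1 G.1 := by
    have h2 : B * jacDet G.1 G.2 =
        (A * pderiv 1 G.1 + B * pderiv 1 G.2) * pderiv 0 G.1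
          - (A * pderiv 0 G.1 + B * pderiv 0 G.2) * pderiv 1 G.1 := by
      unfold jacDet; ring
    rw [E 0, E 1, hpd0, hpd1] at h2
    rw [← hdet]
    exact h2
  rcases lt_trichotomy γ (β - α) with hlt | heq | hgt
  · exfalso
    -- γ < β - α : cancel X^(γ-1) and get X0 ∣ γ S ∂G₁/∂y
    obtain ⟨k, rfl⟩ : ∃ k, γ = k + 1 := ⟨γ - 1, by omega⟩
    rw [show β - α - 1 = k + 1 + (β - α - 1 - (k + 1)) from by omega,
      Nat.add_sub_cancel] at starB
    have key : (X 0 : MvPolynomial (Fin 2) ℂ) ^ k *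
          (X 0 * (B * MvPolynomial.C c * X 0 ^ (β - α - 1 - (k + 1)))) =
        (X 0 : MvPolynomial (Fin 2) ℂ) ^ k *
          (X 0 * (pderiv 1 S * pderiv 0 G.1 - pderiv 0 S * pderiv 1 G.1)
            - ((k + 1 : ℕ) : MvPolynomial (Fin 2) ℂ) * S * pderiv 1 G.1) := by
      linear_combination starB
    have key2 := mul_left_cancel₀ (pow_ne_zero k (X_ne_zero (0 : Fin 2))) key
    have hdvd : (X 0 : MvPolynomial (Fin 2) ℂ) ∣
        ((k + 1 : ℕ) : MvPolynomial (Fin 2) ℂ) * (S * pderiv 1 G.1) :=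
      ⟨(pderiv 1 S * pderiv 0 G.1 - pderiv 0 S * pderiv 1 G.1)
          - B * MvPolynomial.C c * X 0 ^ (β - α - 1 - (k + 1)),
        by linear_combination key2⟩
    rcases prime_X0.2.2 _ _ hdvd with h | h
    · have h0 := eval0_of_X0_dvd _ h 0
      rw [map_natCast] at h0
      exact Nat.cast_ne_zero.mpr (Nat.succ_ne_zero k) h0
    · rcases prime_X0.2.2 _ _ h with hS | hg
      · rcases hS0 with ⟨y0, hy0⟩
        exact hy0 (eval0_of_X0_dvd S hS y0)
      · have hz : (aeval ![0, Polynomial.X] (pderiv 1 G.1) : Polynomial ℂ) = 0 := by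
          rcases hg with ⟨t, ht⟩
          rw [ht, map_mul]
          simp
        have hCc := Polynomial.eq_C_of_derivative_eq_zero (by rw [psi_derivative]; exact hz)
        rcases hG1 with ⟨y1, y2, hne⟩
        apply hne
        show eval ![0, y1] G.1 = eval ![0, y2] G.1
        rw [eval2_psi, eval2_psi, hCc]
        simp
  · exact heq
  · exfalso
    -- γ > β - α : X0 divides A, B and H∘G; the whole curve is singular
    have hAd : (X 0 : MvPolynomial (Fin 2) ℂ) ∣ A := by
      have starA' := starA
      rw [show γ = (β - α - 1) + 1 + (γ - 1 - (β - α)) + 1 from by omega,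
        Nat.add_sub_cancel] at starA'
      have key : (X 0 : MvPolynomial (Fin 2) ℂ) ^ (β - α - 1) * (A * MvPolynomial.C c) =
          (X 0 : MvPolynomial (Fin 2) ℂ) ^ (β - α - 1) *
            (X 0 * ((((β - α - 1) + 1 + (γ - 1 - (β - α)) + 1 : ℕ) :
                MvPolynomial (Fin 2) ℂ) * X 0 ^ (γ - 1 - (β - α)) * S * pderiv 1 G.2
              + X 0 ^ (γ - 1 - (β - α) + 1)
                * (pderiv 0 S * pderiv 1 G.2 - pderiv 1 S * pderiv 0 G.2))) := by
        linear_combination starA'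
      have key2 := mul_left_cancel₀ (pow_ne_zero _ (X_ne_zero (0 : Fin 2))) key
      have : (X 0 : MvPolynomial (Fin 2) ℂ) ∣ A * MvPolynomial.C c := ⟨_, key2⟩
      rcases prime_X0.2.2 _ _ this with h | h
      · exact h
      · exfalso
        have h0 := eval0_of_X0_dvd _ h 0
        rw [eval_C] at h0
        exact hc h0
    have hBd : (X 0 : MvPolynomial (Fin 2) ℂ) ∣ B := by
      have starB' := starB
      rw [show γ = (β - α - 1) + 1 + (γ - 1 - (β - α)) + 1 from by omega,
        Nat.add_sub_cancel] at starB'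
      have key : (X 0 : MvPolynomial (Fin 2) ℂ) ^ (β - α - 1) * (B * MvPolynomial.C c) =
          (X 0 : MvPolynomial (Fin 2) ℂ) ^ (β - α - 1) *
            (X 0 * (X 0 ^ (γ - 1 - (β - α) + 1)
                * (pderiv 1 S * pderiv 0 G.1 - pderiv 0 S * pderiv 1 G.1)
              - (((β - α - 1) + 1 + (γ - 1 - (β - α)) + 1 : ℕ) :
                MvPolynomial (Fin 2) ℂ) * X 0 ^ (γ - 1 - (β - α)) * S * pderiv 1 G.1)) := by
        linear_combination starB'
      have key2 := mul_left_cancel₀ (pow_ne_zero _ (X_ne_zero (0 : Fin 2))) key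
      have : (X 0 : MvPolynomial (Fin 2) ℂ) ∣ B * MvPolynomial.C c := ⟨_, key2⟩
      rcases prime_X0.2.2 _ _ this with h | h
      · exact h
      · exfalso
        have h0 := eval0_of_X0_dvd _ h 0
        rw [eval_C] at h0
        exact hc h0
    have hHd : (X 0 : MvPolynomial (Fin 2) ℂ) ∣ aeval ![G.1, G.2] H := by
      rw [hfac, show γ = (γ - 1) + 1 from by omega, pow_succ']
      exact ⟨X 0 ^ (γ - 1) * S, by ring⟩
    -- Nullstellensatz
    have hHne : H ≠ 0 := hH.ne_zero
    have hIP : (Ideal.span {H}).IsPrime :=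
      (Ideal.span_singleton_prime hHne).mpr (UniqueFactorizationMonoid.irreducible_iff_prime.mp hH)
    have hvan : vanishingIdeal ℂ (zeroLocus ℂ (Ideal.span {H})) = Ideal.span {H} :=
      MvPolynomial.IsPrime.vanishingIdeal_zeroLocus (K := ℂ) (Ideal.span {H})
    have hmem : ∀ i : Fin 2, pderiv i H ∈ Ideal.span {H} := by
      intro i
      rw [← hvan, mem_vanishingIdeal_iff]
      intro x hx
      have hxH : eval x H = 0 := hx H (Ideal.subset_span rfl)
      have hmemz : ((x 0, x 1) : ℂ × ℂ) ∈ {p : ℂ × ℂ | eval2 H p.1 p.2 = 0} := by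
        show eval ![x 0, x 1] H = 0
        have : (![x 0, x 1] : Fin 2 → ℂ) = x := by
          funext j; fin_cases j <;> rfl
        rw [this]
        exact hxH
      rw [hzero] at hmemz
      rcases hmemz with ⟨y, hy⟩
      have hx0 : x 0 = eval ![0, y] G.1 := congrArg Prod.fst hy
      have hx1 : x 1 = eval ![0, y] G.2 := congrArg Prod.snd hy
      have hcomp := eval_aeval_fin2 ![G.1, G.2] (pderiv i H) ![0, y]
      have hfun : (fun j => eval ![0, y] ((![G.1, G.2] : Fin 2 → MvPolynomial (Fin 2) ℂ) j)) = x := by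
        funext j; fin_cases j
        · exact hx0.symm
        · exact hx1.symm
      have hA0 : eval ![0, y] (aeval ![G.1, G.2] (pderiv i H)) = 0 := by
        fin_cases i
        · exact eval0_of_X0_dvd A hAd y
        · exact eval0_of_X0_dvd B hBd y
      rw [hcomp, hfun] at hA0
      exact hA0
    have hdvd0 : H ∣ pderiv 0 H := Ideal.mem_span_singleton.mp (hmem 0)
    have hdvd1 : H ∣ pderiv 1 H := Ideal.mem_span_singleton.mp (hmem 1)
    have h0 : pderiv 0 H = 0 := pderiv0_eq_zero_of_dvd H hdvd0
    have h1 : pderiv 1 H = 0 := by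
      have hdvd' : rename (Equiv.swap (0 : Fin 2) 1) H ∣
          pderiv 0 (rename (Equiv.swap (0 : Fin 2) 1) H) := by
        have := pderiv_rename (Equiv.injective (Equiv.swap (0 : Fin 2) 1)) 1 H
        rw [show Equiv.swap (0 : Fin 2) 1 1 = 0 from rfl] at this
        rw [this]
        rcases hdvd1 with ⟨t, ht⟩
        exact ⟨rename (Equiv.swap (0 : Fin 2) 1) t, by rw [ht, map_mul]⟩
      have hz := pderiv0_eq_zero_of_dvd _ hdvd'
      have := pderiv_rename (Equiv.injective (Equiv.swap (0 : Fin 2) 1)) 1 H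
      rw [show Equiv.swap (0 : Fin 2) 1 1 = 0 from rfl, hz] at this
      exact (map_eq_zero_iff _ (rename_injective _ (Equiv.injective _))).mp this.symm
    have hz : ∀ (i : Fin 2) m, m ∈ H.support → m i = 0 := by
      intro i
      fin_cases i
      · exact support_zero_of_pderiv H 0 h0
      · exact support_zero_of_pderiv H 1 h1
    have hCH := eq_C_of_pderiv_zero' H hz
    rcases eq_or_ne (coeff 0 H) 0 with h | h
    · rw [h, map_zero] at hCH
      exact hHne hCH
    · have hu : IsUnit H := by
        rw [hCH]; exact h.isUnit.map (MvPolynomial.C : ℂ →+* MvPolynomial (Fin 2) ℂ)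
      exact hH.not_isUnit hu
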